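/- Suppose J is recursively enumerable and there exists a recursively enumerable set H ⊆ I³ such that for all i₁,i₂ ∈ I, U_{i₁} ∩ U_{i₂} = ⋃ {U_i | (i₁,i₂,i) ∈ H}. If f is (U,V)-computable then there exists a recursively enumerable (U,V)-approximation system for f. -/

import Mathlib

/-- A set in a primcodable type is recursively enumerable. -/
def IsRE {α : Type} [Primcodable α] (S : Set α) : Prop :=
  Partrec fun a => Part.assert (a ∈ S) fun _ => Part.some ()

/-- `F` is an enumeration operator. -/
def IsEnumOp (F : Set ℕ → Set ℕ) : Prop :=
  ∃ W : Set (List ℕ × ℕ), IsRE W ∧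
    ∀ M : Set ℕ, F M = {j | ∃ l : List ℕ, (∀ i ∈ l, i ∈ M) ∧ (l, j) ∈ W}

open Nat.Partrec (Code)
open Nat.Partrec.Code Encodable

/-- Extract a primitive recursive, monotone "stage" matrix from an r.e. predicate. -/
theorem repred_matrix {α : Type} [Primcodable α] {p : α → Prop} (hp : REPred p) :
    ∃ g : α → ℕ → Bool, Primrec₂ g ∧ (∀ a n m, n ≤ m → g a n = true → g a m = true) ∧
      ∀ a, p a ↔ ∃ n, g a n = true := by
  obtain ⟨c, hc⟩ := Code.exists_code.1 hp
  refine ⟨fun a n => (Code.evaln n c (Encodable.encode a)).isSome, ?_, ?_, ?_⟩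
  · exact Primrec.option_isSome.comp (Code.primrec_evaln.comp
      (((Primrec.snd).pair (Primrec.const c)).pair (Primrec.encode.comp Primrec.fst)))
  · intro a n m hnm h
    rw [Option.isSome_iff_exists] at h ⊢
    obtain ⟨x, hx⟩ := h
    exact ⟨x, Code.evaln_mono hnm hx⟩
  · intro a
    have h1 : p a ↔ (Part.assert (p a) fun _ => Part.some ()).Dom := by
      simp [Part.assert, Part.some]
    have h2 : eval c (Encodable.encode a) =
        ((Part.assert (p a) fun _ => Part.some ()).map Encodable.encode) := by
      rw [hc]; simp [Encodable.encodek, ]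
    constructor
    · intro hpa
      have : (eval c (Encodable.encode a)).Dom := by
        rw [h2]; simpa using h1.1 hpa
      obtain ⟨x, hx⟩ := Part.dom_iff_mem.1 this
      obtain ⟨k, hk⟩ := Code.evaln_complete.1 hx
      exact ⟨k, by rw [Option.isSome_iff_exists]; exact ⟨x, hk⟩⟩
    · rintro ⟨n, hn⟩
      rw [Option.isSome_iff_exists] at hn
      obtain ⟨x, hx⟩ := hn
      have : x ∈ eval c (Encodable.encode a) := Code.evaln_complete.2 ⟨n, hx⟩
      have hd : (eval c (Encodable.encode a)).Dom := Part.dom_iff_mem.2 ⟨x, this⟩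
      rw [h2] at hd
      exact h1.2 (by simpa using hd)


/-- A predicate with a computable stage matrix is r.e. -/
theorem repred_of_matrix {α : Type} [Primcodable α] {p : α → Prop} (g : α → ℕ → Bool)
    (hg : Computable₂ g) (h : ∀ a, p a ↔ ∃ n, g a n = true) : REPred p := by
  have h1 : Partrec fun a => (Nat.rfind fun n => Part.some (g a n)).map fun _ => () := by
    apply Partrec.map
    · exact Partrec.rfind (hg.partrec₂)
    · exact (Computable.const ()).to₂
  apply h1.of_eq
  intro a
  apply Part.ext
  intro u
  have hu : u = () := rfl
  subst hu
  rw [Part.mem_map_iff, Part.mem_assert_iff]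
  constructor
  · rintro ⟨n, hn, -⟩
    have := Nat.rfind_spec hn
    simp only [Part.mem_some_iff] at this
    exact ⟨(h a).2 ⟨n, this.symm⟩, Part.mem_some _⟩
  · rintro ⟨hpa, -⟩
    obtain ⟨n, hn⟩ := (h a).1 hpa
    have hd : (Nat.rfind fun n => Part.some (g a n)).Dom := by
      apply Nat.rfind_dom.2
      exact ⟨n, by simp [hn], fun {m} _ => trivial⟩
    exact ⟨_, Part.get_mem hd, rfl⟩

theorem REPred.comp' {α β : Type} [Primcodable α] [Primcodable β] {p : β → Prop}
    (hp : REPred p) {f : α → β} (hf : Computable f) : REPred fun a => p (f a) :=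
  Partrec.comp hp hf

theorem REPred.and' {α : Type} [Primcodable α] {p q : α → Prop} (hp : REPred p)
    (hq : REPred q) : REPred fun a => p a ∧ q a := by
  obtain ⟨gp, hgp, -, hp'⟩ := repred_matrix hp
  obtain ⟨gq, hgq, -, hq'⟩ := repred_matrix hq
  apply repred_of_matrix (fun a n => gp a n.unpair.1 && gq a n.unpair.2)
  · exact ((Primrec.dom_bool₂ (· && ·)).comp
      (hgp.comp Primrec.fst (Primrec.fst.comp (Primrec.unpair.comp Primrec.snd)))
      (hgq.comp Primrec.fst (Primrec.snd.comp (Primrec.unpair.comp Primrec.snd)))).to_comp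
  · intro a
    rw [hp' a, hq' a]
    constructor
    · rintro ⟨⟨n, hn⟩, ⟨m, hm⟩⟩
      exact ⟨Nat.pair n m, by simp [Nat.unpair_pair, hn, hm]⟩
    · rintro ⟨n, hn⟩
      rw [Bool.and_eq_true] at hn
      exact ⟨⟨_, hn.1⟩, ⟨_, hn.2⟩⟩

theorem REPred.exists' {α β : Type} [Primcodable α] [Primcodable β] {p : α × β → Prop}
    (hp : REPred p) : REPred fun a => ∃ b, p (a, b) := by
  obtain ⟨g, hg, -, hp'⟩ := repred_matrix hp
  apply repred_of_matrix (fun a n =>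
    (Encodable.decode (α := β) n.unpair.1).casesOn false fun b => g (a, b) n.unpair.2)
  · apply Primrec.to_comp
    apply Primrec.option_casesOn
      (Primrec.decode.comp (Primrec.fst.comp (Primrec.unpair.comp Primrec.snd)))
      (Primrec.const false)
    exact (hg.comp (Primrec.fst.comp Primrec.fst |>.pair Primrec.snd)
      ((Primrec.snd.comp (Primrec.unpair.comp (Primrec.snd.comp Primrec.fst))))).to₂
  · intro a
    constructor
    · rintro ⟨b, hb⟩
      obtain ⟨n, hn⟩ := (hp' _).1 hb
      refine ⟨Nat.pair (Encodable.encode b) n, ?_⟩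
      simp [Nat.unpair_pair, Encodable.encodek, hn]
    · rintro ⟨n, hn⟩
      rcases hd : Encodable.decode (α := β) n.unpair.1 with - | b
      · rw [hd] at hn; simp at hn
      · rw [hd] at hn
        exact ⟨b, (hp' _).2 ⟨n.unpair.2, hn⟩⟩

def Good (H : Set (ℕ × ℕ × ℕ)) : List ℕ → ℕ → Prop
  | [], i => ∃ t, t ∈ H ∧ t.2.2 = i
  | a :: l, i => ∃ i', Good H l i' ∧ (a, i', i) ∈ H

def Tb (gB : ℕ → ℕ → Bool) (gH : ℕ × ℕ × ℕ → ℕ → Bool) : List ℕ → ℕ → List Bool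
  | [], s => (List.range s).map fun i => gB i s
  | a :: l, s => (List.range s).map fun i =>
      (List.range s).any fun i' => (Tb gB gH l s).getD i' false && gH (a, i', i) s

def GBo (gB : ℕ → ℕ → Bool) (gH : ℕ × ℕ × ℕ → ℕ → Bool) (l : List ℕ) (i s : ℕ) : Bool :=
  (Tb gB gH l s).getD i false

theorem getD_range_map (f : ℕ → Bool) (s i : ℕ) :
    ((List.range s).map f).getD i false = if i < s then f i else false := by
  rcases lt_or_ge i s with h | h
  · rw [List.getD_eq_getElem?_getD]
    simp [List.getElem?_map, List.getElem?_range h, h]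
  · rw [List.getD_eq_getElem?_getD, List.getElem?_eq_none (by simpa using h)]
    simp [Nat.not_lt.2 h]

theorem GBo_nil {gB gH i s} : GBo gB gH [] i s = true ↔ i < s ∧ gB i s = true := by
  rw [GBo, Tb, getD_range_map]
  split <;> simp_all

theorem GBo_cons {gB gH a l i s} : GBo gB gH (a :: l) i s = true ↔
    i < s ∧ ∃ i' < s, GBo gB gH l i' s = true ∧ gH (a, i', i) s = true := by
  rw [GBo, Tb, getD_range_map]
  split <;> simp_all [List.any_eq_true, GBo]

theorem GBo_mono {gB gH} (hB : ∀ i n m, n ≤ m → gB i n = true → gB i m = true)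
    (hH : ∀ t n m, n ≤ m → gH t n = true → gH t m = true) :
    ∀ l i s s', s ≤ s' → GBo gB gH l i s = true → GBo gB gH l i s' = true := by
  intro l
  induction l with
  | nil =>
    intro i s s' hs h
    rw [GBo_nil] at h ⊢
    exact ⟨lt_of_lt_of_le h.1 hs, hB _ _ _ hs h.2⟩
  | cons a l ih =>
    intro i s s' hs h
    rw [GBo_cons] at h ⊢
    obtain ⟨hi, i', hi', h1, h2⟩ := h
    exact ⟨lt_of_lt_of_le hi hs, i', lt_of_lt_of_le hi' hs, ih _ _ _ hs h1, hH _ _ _ hs h2⟩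

theorem good_iff_GBo {H : Set (ℕ × ℕ × ℕ)} {gB gH}
    (hB : ∀ i n m, n ≤ m → gB i n = true → gB i m = true)
    (hH : ∀ t n m, n ≤ m → gH t n = true → gH t m = true)
    (hBiff : ∀ i, (∃ t, t ∈ H ∧ t.2.2 = i) ↔ ∃ s, gB i s = true)
    (hHiff : ∀ t, t ∈ H ↔ ∃ s, gH t s = true) :
    ∀ l i, Good H l i ↔ ∃ s, GBo gB gH l i s = true := by
  intro l
  induction l with
  | nil =>
    intro i
    rw [Good, hBiff]
    constructor
    · rintro ⟨s, hs⟩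
      refine ⟨max s (i + 1), ?_⟩
      rw [GBo_nil]
      exact ⟨lt_of_lt_of_le (Nat.lt_succ_self i) (le_max_right _ _), hB _ _ _ (le_max_left _ _) hs⟩
    · rintro ⟨s, hs⟩
      rw [GBo_nil] at hs
      exact ⟨s, hs.2⟩
  | cons a l ih =>
    intro i
    rw [Good]
    constructor
    · rintro ⟨i', hg, hmem⟩
      obtain ⟨s₁, hs₁⟩ := (ih i').1 hg
      obtain ⟨s₂, hs₂⟩ := (hHiff _).1 hmem
      refine ⟨max (max s₁ s₂) (max (i + 1) (i' + 1)), ?_⟩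
      rw [GBo_cons]
      refine ⟨lt_of_lt_of_le (Nat.lt_succ_self i) ((le_max_left _ _).trans (le_max_right _ _)),
        i', lt_of_lt_of_le (Nat.lt_succ_self i') ((le_max_right _ _).trans (le_max_right _ _)),
        GBo_mono hB hH _ _ _ _ ((le_max_left _ _).trans (le_max_left _ _)) hs₁,
        hH _ _ _ ((le_max_right _ _).trans (le_max_left _ _)) hs₂⟩
    · rintro ⟨s, hs⟩
      rw [GBo_cons] at hs
      obtain ⟨-, i', -, h1, h2⟩ := hs
      exact ⟨i', (ih i').2 ⟨s, h1⟩, (hHiff _).2 ⟨s, h2⟩⟩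

theorem list_any_eq_foldr {α : Type} (l : List α) (p : α → Bool) :
    l.any p = l.foldr (fun a r => p a || r) false := by
  induction l with
  | nil => rfl
  | cons a l ih => simp [List.any_cons, ih]

theorem primrec_range_any {α : Type} [Primcodable α] {q : α → ℕ → Bool} {s : α → ℕ}
    (hs : Primrec s) (hq : Primrec₂ q) : Primrec fun a => (List.range (s a)).any (q a) := by
  have h : Primrec fun a => (List.range (s a)).foldr (fun b r => q a b || r) false :=
    Primrec.list_foldr (Primrec.list_range.comp hs) (Primrec.const false)
      (((Primrec.dom_bool₂ (· || ·)).comp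
        (hq.comp Primrec.fst (Primrec.fst.comp Primrec.snd))
        (Primrec.snd.comp Primrec.snd)).to₂)
  exact h.of_eq fun a => (list_any_eq_foldr _ _).symm

theorem primrec_range_map {α : Type} [Primcodable α] {q : α → ℕ → Bool} {s : α → ℕ}
    (hs : Primrec s) (hq : Primrec₂ q) : Primrec fun a => (List.range (s a)).map (q a) :=
  Primrec.list_map (Primrec.list_range.comp hs) hq

theorem Tb_primrec {gB : ℕ → ℕ → Bool} {gH : ℕ × ℕ × ℕ → ℕ → Bool}
    (hgB : Primrec₂ gB) (hgH : Primrec₂ gH) :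
    Primrec fun x : List ℕ × ℕ => Tb gB gH x.1 x.2 := by
  have hbase : Primrec fun a : List ℕ × ℕ => (List.range a.2).map fun i => gB i a.2 :=
    primrec_range_map Primrec.snd (hgB.comp Primrec.snd (Primrec.snd.comp Primrec.fst))
  have hc1 : Primrec fun y : (((List ℕ × ℕ) × ℕ × List ℕ × List Bool) × ℕ) × ℕ =>
      y.1.1.2.2.2.getD y.2 false :=
    (Primrec.list_getD false).comp
      (Primrec.snd.comp (Primrec.snd.comp (Primrec.snd.comp (Primrec.fst.comp
        Primrec.fst)))) Primrec.snd
  have hc2 : Primrec fun y : (((List ℕ × ℕ) × ℕ × List ℕ × List Bool) × ℕ) × ℕ =>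
      gH (y.1.1.2.1, y.2, y.1.2) y.1.1.1.2 :=
    hgH.comp
      ((Primrec.fst.comp (Primrec.snd.comp (Primrec.fst.comp Primrec.fst))).pair
        (Primrec.snd.pair (Primrec.snd.comp Primrec.fst)))
      (Primrec.snd.comp (Primrec.fst.comp (Primrec.fst.comp Primrec.fst)))
  have hq2 : Primrec fun y : (((List ℕ × ℕ) × ℕ × List ℕ × List Bool) × ℕ) × ℕ =>
      y.1.1.2.2.2.getD y.2 false && gH (y.1.1.2.1, y.2, y.1.2) y.1.1.1.2 :=
    (Primrec.dom_bool₂ (· && ·)).comp hc1 hc2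
  have hq1 : Primrec fun y : ((List ℕ × ℕ) × ℕ × List ℕ × List Bool) × ℕ =>
      (List.range y.1.1.2).any fun i' =>
        y.1.2.2.2.getD i' false && gH (y.1.2.1, i', y.2) y.1.1.2 :=
    primrec_range_any (Primrec.snd.comp (Primrec.fst.comp Primrec.fst)) hq2.to₂
  have h0 : Primrec fun p : (List ℕ × ℕ) × ℕ × List ℕ × List Bool =>
      (List.range p.1.2).map fun i =>
        (List.range p.1.2).any fun i' =>
          p.2.2.2.getD i' false && gH (p.2.1, i', i) p.1.2 :=
    primrec_range_map (Primrec.snd.comp Primrec.fst) hq1.to₂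
  have hstep : Primrec₂ fun (a : List ℕ × ℕ) (t : ℕ × List ℕ × List Bool) =>
      (List.range a.2).map fun i =>
        (List.range a.2).any fun i' => t.2.2.getD i' false && gH (t.1, i', i) a.2 := h0.to₂
  have := Primrec.list_rec (Primrec.fst (α := List ℕ) (β := ℕ)) hbase hstep
  apply this.of_eq
  rintro ⟨l, s⟩
  induction l with
  | nil => rfl
  | cons a l ih => simp only [List.recOn] at ih ⊢; rw [Tb]; simp only [ih]

theorem good_repred {H : Set (ℕ × ℕ × ℕ)} (hHre : REPred (· ∈ H)) :
    REPred fun q : List ℕ × ℕ => Good H q.1 q.2 := by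
  have hbase : REPred fun i : ℕ => ∃ t, t ∈ H ∧ t.2.2 = i := by
    have h2 : REPred fun x : ℕ × (ℕ × ℕ × ℕ) => x.2 ∈ H ∧ x.2.2.2 = x.1 := by
      apply REPred.and'
      · exact hHre.comp' Computable.snd
      · apply ComputablePred.to_re
        refine ⟨inferInstance, ?_⟩
        exact Primrec.to_comp (by convert (Primrec.eq.comp
          (Primrec.snd.comp (Primrec.snd.comp Primrec.snd)) Primrec.fst).choose_spec)
    exact REPred.exists' h2
  obtain ⟨gB, hgBp, hgBmono, hgBiff⟩ := repred_matrix hbase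
  obtain ⟨gH, hgHp, hgHmono, hgHiff⟩ := repred_matrix hHre
  apply repred_of_matrix (fun q n => GBo gB gH q.1 q.2 n)
  · have h1 : Primrec fun y : (List ℕ × ℕ) × ℕ => (Tb gB gH y.1.1 y.2).getD y.1.2 false :=
      (Primrec.list_getD false).comp
        ((Tb_primrec hgBp hgHp).comp ((Primrec.fst.comp Primrec.fst).pair Primrec.snd))
        (Primrec.snd.comp Primrec.fst)
    exact (Primrec₂.to_comp h1.to₂ :)
  · intro q
    exact good_iff_GBo hgBmono hgHmono hgBiff hgHiff q.1 q.2

/-- if J is r.e., intersections of base sets of U are computable via an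
r.e. set H, and f is (U,V)-computable, then there is an r.e. (U,V)-approximation
system for f. -/
theorem stmt5 {X Y : Type*} [TopologicalSpace X] [TopologicalSpace Y]
    (I J : Set ℕ) (U : ℕ → Set X) (V : ℕ → Set Y)
    (hU : TopologicalSpace.IsTopologicalBasis (U '' I))
    (hV : TopologicalSpace.IsTopologicalBasis (V '' J))
    (E : Set X) (f : X → Y)
    (hJre : IsRE J)
    (H : Set (ℕ × ℕ × ℕ))
    (hHI : ∀ t ∈ H, t.1 ∈ I ∧ t.2.1 ∈ I ∧ t.2.2 ∈ I)
    (hHre : IsRE H)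
    (hH : ∀ i₁ ∈ I, ∀ i₂ ∈ I,
        U i₁ ∩ U i₂ = ⋃ i ∈ {i | (i₁, i₂, i) ∈ H}, U i)
    (hcomp : ∃ F : Set ℕ → Set ℕ, IsEnumOp F ∧
        ∀ x ∈ E, {j | j ∈ J ∧ f x ∈ V j} = F {i | i ∈ I ∧ x ∈ U i}) :
    ∃ R : Set (ℕ × ℕ), IsRE R ∧ (∀ p ∈ R, p.1 ∈ I ∧ p.2 ∈ J) ∧
      ∀ x ∈ E, ∀ j ∈ J, f x ∈ V j ↔ ∃ i, (i, j) ∈ R ∧ x ∈ U i := by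
  obtain ⟨F, ⟨W, hWre, hFW⟩, hFx⟩ := hcomp
  -- basic facts about Good
  have good_mem_I : ∀ l i, Good H l i → i ∈ I := by
    intro l
    cases l with
    | nil =>
      rintro i ⟨t, ht, hti⟩
      exact hti ▸ (hHI t ht).2.2
    | cons a l =>
      rintro i ⟨i', -, hmem⟩
      exact (hHI _ hmem).2.2
  have good_subset : ∀ l i, Good H l i → ∀ x, x ∈ U i → ∀ a ∈ l, a ∈ I ∧ x ∈ U a := by
    intro l
    induction l with
    | nil => rintro i - x - a ha; exact absurd ha (List.not_mem_nil)
    | cons b l ih =>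
      rintro i ⟨i', hg, hmem⟩ x hx a ha
      have hb : b ∈ I := (hHI _ hmem).1
      have hi' : i' ∈ I := (hHI _ hmem).2.1
      have hsub : x ∈ U b ∩ U i' := by
        rw [hH b hb i' hi']
        exact Set.mem_biUnion hmem hx
      rcases List.mem_cons.1 ha with rfl | ha'
      · exact ⟨hb, hsub.1⟩
      · exact ih i' hg x hsub.2 a ha'
  have good_exists : ∀ (x : X) (l : List ℕ), (∀ a ∈ l, a ∈ I ∧ x ∈ U a) →
      ∃ i, Good H l i ∧ x ∈ U i := by
    intro x l
    induction l with
    | nil =>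
      intro _
      have hx : x ∈ ⋃₀ (U '' I) := by rw [hU.sUnion_eq]; trivial
      obtain ⟨t, ⟨i₀, hi₀, rfl⟩, hxt⟩ := hx
      have : x ∈ U i₀ ∩ U i₀ := ⟨hxt, hxt⟩
      rw [hH i₀ hi₀ i₀ hi₀] at this
      obtain ⟨s, ⟨i, rfl⟩, hs⟩ := this
      obtain ⟨himem, hxs⟩ := by simpa using hs
      exact ⟨i, ⟨(i₀, i₀, i), himem, rfl⟩, hxs⟩
    | cons a l ih =>
      intro hl
      obtain ⟨i', hg, hxi'⟩ := ih fun b hb => hl b (List.mem_cons_of_mem a hb)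
      have hi' : i' ∈ I := good_mem_I l i' hg
      obtain ⟨haI, hxa⟩ := hl a (List.mem_cons_self)
      have : x ∈ U a ∩ U i' := ⟨hxa, hxi'⟩
      rw [hH a haI i' hi'] at this
      obtain ⟨s, ⟨i, rfl⟩, hs⟩ := this
      obtain ⟨himem, hxs⟩ := by simpa using hs
      exact ⟨i, ⟨i', hg, himem⟩, hxs⟩
  refine ⟨{p : ℕ × ℕ | p.2 ∈ J ∧ ∃ l : List ℕ, (l, p.2) ∈ W ∧ Good H l p.1}, ?_, ?_, ?_⟩
  · show REPred _
    have : REPred fun p : ℕ × ℕ =>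
        p.2 ∈ J ∧ ∃ l : List ℕ, (l, p.2) ∈ W ∧ Good H l p.1 := by
      apply REPred.and'
      · exact REPred.comp' (id hJre : REPred (· ∈ J)) Computable.snd
      · have hinner : REPred fun x : (ℕ × ℕ) × List ℕ =>
            (x.2, x.1.2) ∈ W ∧ Good H x.2 x.1.1 := by
          apply REPred.and'
          · exact REPred.comp' (id hWre : REPred (· ∈ W))
              (Computable.snd.pair (Computable.snd.comp Computable.fst))
          · exact REPred.comp' (good_repred (id hHre : REPred (· ∈ H)))
              (Computable.snd.pair (Computable.fst.comp Computable.fst))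
        exact REPred.exists' hinner
    exact this
  · rintro ⟨i, j⟩ ⟨hjJ, l, -, hg⟩
    exact ⟨good_mem_I l i hg, hjJ⟩
  · intro x hx j hjJ
    have hkey : {j | j ∈ J ∧ f x ∈ V j} =
        {j | ∃ l : List ℕ, (∀ i ∈ l, i ∈ {i | i ∈ I ∧ x ∈ U i}) ∧ (l, j) ∈ W} := by
      rw [hFx x hx, hFW]
    constructor
    · intro hfx
      have hj : j ∈ {j | j ∈ J ∧ f x ∈ V j} := ⟨hjJ, hfx⟩
      rw [hkey] at hj
      obtain ⟨l, hl, hlW⟩ := hj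
      obtain ⟨i, hg, hxi⟩ := good_exists x l fun a ha => hl a ha
      exact ⟨i, ⟨hjJ, l, hlW, hg⟩, hxi⟩
    · rintro ⟨i, ⟨-, l, hlW, hg⟩, hxi⟩
      have hj : j ∈ {j | ∃ l : List ℕ,
          (∀ i ∈ l, i ∈ {i | i ∈ I ∧ x ∈ U i}) ∧ (l, j) ∈ W} :=
        ⟨l, fun a ha => good_subset l i hg x hxi a ha, hlW⟩
      rw [← hkey] at hj
      exact hj.2
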